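/- For any distinct i, j, k ∈ {1,2,3}, letting L be the subgroup of A generated by {eᵢ, mⱼ, mₖ}, the image of L under φᵢⱼ equals L and the image of L under φᵢₖ equals L; i.e. the S-domain walls s⁽²⁾ᵢⱼ and s⁽²⁾ᵢₖ condense on the (eᵢ, mⱼ, mₖ)-boundary. -/
import Mathlib


/-- The group of topological excitations of three copies of the 3D toric code:
pairs (a, b) of electric/magnetic labels in `(ZMod 2)³`. -/
abbrev A : Type := (Fin 3 → ZMod 2) × (Fin 3 → ZMod 2)

/-- The electric charge `eᵢ`. -/
def e (i : Fin 3) : A := (Pi.single i 1, 0)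

/-- The magnetic flux `mᵢ`. -/
def m (i : Fin 3) : A := (0, Pi.single i 1)

/-- The mutual-statistics pairing `ω((a,b),(a',b')) = a·b' + a'·b`. -/
def ω (x y : A) : ZMod 2 :=
  (∑ t, x.1 t * y.2 t) + (∑ t, y.1 t * x.2 t)

/-- The action of the S-domain wall `s⁽²⁾ᵢⱼ` on excitations:
`(a, b) ↦ (a + bⱼ•δᵢ + bᵢ•δⱼ, b)`. -/
def φ (i j : Fin 3) (x : A) : A :=
  (x.1 + x.2 j • (Pi.single i 1 : Fin 3 → ZMod 2) + x.2 i • (Pi.single j 1 : Fin 3 → ZMod 2), x.2)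

/-- A subgroup `L` of `A` is Lagrangian if it equals its orthogonal complement
with respect to the pairing `ω`. -/
def IsLagrangian (L : AddSubgroup A) : Prop :=
  (L : Set A) = {x : A | ∀ l ∈ L, ω x l = 0}

/-- `φ i j` as an additive homomorphism. -/
def ψ (i j : Fin 3) : A →+ A where
  toFun := φ i j
  map_zero' := by simp [φ]
  map_add' x y := by
    simp only [φ, Prod.mk_add_mk, Prod.snd_add, Prod.fst_add, Pi.add_apply, add_smul,
      Prod.mk.injEq]
    refine ⟨by abel, trivial⟩

lemma ψ_e (i j : Fin 3) : ψ i j (e i) = e i := by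
  simp [ψ, φ, e]

lemma ψ_m_snd (i j : Fin 3) (hij : i ≠ j) : ψ i j (m j) = e i + m j := by
  simp [ψ, φ, e, m, Prod.ext_iff, Pi.single_eq_same, Pi.single_eq_of_ne hij]

lemma ψ_m_other (i j k : Fin 3) (hik : i ≠ k) (hjk : j ≠ k) : ψ i j (m k) = m k := by
  simp [ψ, φ, m, Prod.ext_iff, Pi.single_eq_of_ne hjk, Pi.single_eq_of_ne hik]

lemma e_add_e (i : Fin 3) : e i + e i = 0 := by
  refine Prod.ext ?_ (by simp [e])
  show Pi.single i 1 + Pi.single i 1 = 0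
  rw [← Pi.single_add, show (1 : ZMod 2) + 1 = 0 from rfl, Pi.single_zero]

lemma closure_eq (i j k : Fin 3) :
    AddSubgroup.closure ({e i, e i + m j, m k} : Set A) =
      AddSubgroup.closure ({e i, m j, m k} : Set A) := by
  apply le_antisymm <;> rw [AddSubgroup.closure_le] <;>
    rintro x (rfl | rfl | rfl)
  · exact AddSubgroup.subset_closure (by simp)
  · exact add_mem (AddSubgroup.subset_closure (by simp))
      (AddSubgroup.subset_closure (by simp))
  · exact AddSubgroup.subset_closure (by simp)
  · exact AddSubgroup.subset_closure (by simp)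
  · have hmem : e i + (e i + m j) ∈ AddSubgroup.closure ({e i, e i + m j, m k} : Set A) :=
      add_mem (AddSubgroup.subset_closure (by simp)) (AddSubgroup.subset_closure (by simp))
    rwa [← add_assoc, e_add_e, zero_add] at hmem
  · exact AddSubgroup.subset_closure (by simp)

lemma key (i j k : Fin 3) (hij : i ≠ j) (hjk : j ≠ k) (hik : i ≠ k) :
    φ i j '' ((AddSubgroup.closure {e i, m j, m k} : AddSubgroup A) : Set A) =
      ((AddSubgroup.closure {e i, m j, m k} : AddSubgroup A) : Set A) := by
  have h : φ i j '' ((AddSubgroup.closure {e i, m j, m k} : AddSubgroup A) : Set A) =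
      ((AddSubgroup.map (ψ i j) (AddSubgroup.closure {e i, m j, m k}) : AddSubgroup A) : Set A) :=
    rfl
  rw [h, AddMonoidHom.map_closure]
  rw [Set.image_insert_eq, Set.image_insert_eq, Set.image_singleton,
    ψ_e, ψ_m_snd i j hij, ψ_m_other i j k hik hjk, closure_eq i j k]

theorem stmt_8 (i j k : Fin 3) (hij : i ≠ j) (hjk : j ≠ k) (hik : i ≠ k) :
    φ i j '' ((AddSubgroup.closure {e i, m j, m k} : AddSubgroup A) : Set A) =
      ((AddSubgroup.closure {e i, m j, m k} : AddSubgroup A) : Set A) ∧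
    φ i k '' ((AddSubgroup.closure {e i, m j, m k} : AddSubgroup A) : Set A) =
      ((AddSubgroup.closure {e i, m j, m k} : AddSubgroup A) : Set A) := by
  constructor
  · exact key i j k hij hjk hik
  · have : ({e i, m j, m k} : Set A) = {e i, m k, m j} := by
      ext x; simp [or_comm, or_left_comm]
    rw [this]
    exact key i k j hik hjk.symm hij
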